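/- Let F be a finite set of collinear circles in the plane. Then the join-irreducible elements of the lattice of closed sets of (F,ch) are exactly the sets [A,A] = {C ∈ F : C ⊆ conv(A)} for A ∈ F. -/

import Mathlib

/-- A collinear circle: a circle in the plane whose center `(u,0)` lies on the x-axis,
with radius `r ≥ 0`. -/
structure CC where
  u : ℝ
  r : ℝ
  hr : 0 ≤ r

/-- The point set of a collinear circle. -/
def CC.pts (C : CC) : Set (ℝ × ℝ) := {p : ℝ × ℝ | (p.1 - C.u) ^ 2 + p.2 ^ 2 = C.r ^ 2}

/-- Leftmost point (x-coordinate). -/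
def CC.lmpt (C : CC) : ℝ := C.u - C.r

/-- Rightmost point (x-coordinate). -/
def CC.rmpt (C : CC) : ℝ := C.u + C.r

/-- `lend C ⊑ lend D` for the lexicographic order on left ends `(ℓ(C), -r(C))`. -/
def lendLe (C D : CC) : Prop := C.lmpt < D.lmpt ∨ (C.lmpt = D.lmpt ∧ D.r ≤ C.r)

/-- `rend C ⊑ rend D` for the lexicographic order on right ends `(ρ(C), r(C))`. -/
def rendLe (C D : CC) : Prop := C.rmpt < D.rmpt ∨ (C.rmpt = D.rmpt ∧ C.r ≤ D.r)

/-- The closure operator: `ch F X = {C ∈ F : C ⊆ conv(⋃_{D ∈ X} D)}`. -/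
def ch (F X : Set CC) : Set CC :=
  {C | C ∈ F ∧ C.pts ⊆ convexHull ℝ (⋃ D ∈ X, CC.pts D)}

/-- The horizontal interval `[A,B] = {C ∈ F : lend A ⊑ lend C, rend C ⊑ rend B}`. -/
def hInt (F : Set CC) (A B : CC) : Set CC :=
  {C | C ∈ F ∧ lendLe A C ∧ rendLe C B}

/-- `F` is a concave set of collinear circles. -/
def ConcaveF (F : Set CC) : Prop :=
  ∀ C₁ ∈ F, ∀ C₂ ∈ F, ∀ C₃ ∈ F, lendLe C₁ C₂ → rendLe C₂ C₃ →
    C₂.pts ⊆ convexHull ℝ (C₁.pts ∪ C₃.pts)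

/- ### Auxiliary geometry -/


def CC.disk (C : CC) : Set (ℝ × ℝ) := {p : ℝ × ℝ | (p.1 - C.u) ^ 2 + p.2 ^ 2 ≤ C.r ^ 2}

lemma CC.pts_nonempty (C : CC) : C.pts.Nonempty := ⟨(C.u + C.r, 0), by simp [CC.pts]⟩

lemma CC.disk_convex (C : CC) : Convex ℝ C.disk := by
  rintro ⟨a, b⟩ h1 ⟨c, d⟩ h2 s t hs ht hst
  simp only [CC.disk, Set.mem_setOf_eq, Prod.smul_mk, Prod.mk_add_mk, smul_eq_mul] at *
  obtain rfl : t = 1 - s := by linarith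
  nlinarith [mul_nonneg (mul_nonneg hs ht) (sq_nonneg (a - c)),
    mul_nonneg (mul_nonneg hs ht) (sq_nonneg (b - d)),
    mul_le_mul_of_nonneg_left h1 hs, mul_le_mul_of_nonneg_left h2 ht]

lemma CC.convexHull_pts (C : CC) : convexHull ℝ C.pts = C.disk := by
  apply le_antisymm
  · exact convexHull_min (fun p hp => le_of_eq hp) C.disk_convex
  · rintro ⟨x, y⟩ h
    simp only [CC.disk, Set.mem_setOf_eq] at h
    set s : ℝ := Real.sqrt (C.r ^ 2 - (x - C.u) ^ 2) with hs
    have hxu : (x - C.u) ^ 2 ≤ C.r ^ 2 := by nlinarith [sq_nonneg y]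
    have hs2 : s ^ 2 = C.r ^ 2 - (x - C.u) ^ 2 := Real.sq_sqrt (by linarith)
    have hsnn : 0 ≤ s := Real.sqrt_nonneg _
    have h1 : (x, s) ∈ C.pts := by simp [CC.pts]; linarith
    have h2 : (x, -s) ∈ C.pts := by simp [CC.pts]; linarith
    have hy2 : y ^ 2 ≤ s ^ 2 := by linarith
    have hy : -s ≤ y ∧ y ≤ s := abs_le.mp (by
      rw [← Real.sqrt_sq_eq_abs]; rw [show s = Real.sqrt (s^2) from (Real.sqrt_sq hsnn).symm]
      exact Real.sqrt_le_sqrt hy2)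
    rcases eq_or_lt_of_le hsnn with h0 | h0
    · have : y = 0 := by nlinarith [hy.1, hy.2]
      have : (x, y) ∈ C.pts := by simp [CC.pts]; nlinarith
      exact subset_convexHull ℝ _ this
    · have hseg : (x, y) ∈ segment ℝ ((x, -s) : ℝ × ℝ) (x, s) := by
        refine ⟨(s - y) / (2 * s), (y + s) / (2 * s),
          div_nonneg (by linarith [hy.2]) (by linarith),
          div_nonneg (by linarith [hy.1]) (by linarith), ?_, ?_⟩
        · field_simp; ring
        · simp [Prod.ext_iff, Prod.smul_mk, smul_eq_mul]
          constructor
          · field_simp; ring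
          · field_simp; ring
      exact (convex_convexHull ℝ C.pts).segment_subset
        (subset_convexHull ℝ _ h2) (subset_convexHull ℝ _ h1) hseg

lemma CC.mem_extremePoints_disk (C : CC) {p : ℝ × ℝ} (hp : p ∈ C.pts) :
    p ∈ C.disk.extremePoints ℝ := by
  obtain ⟨x, y⟩ := p
  refine ⟨le_of_eq hp, ?_⟩
  rintro ⟨a, b⟩ h1 ⟨c, d⟩ h2 ⟨s, t, hs, ht, hst, hpt⟩
  simp only [CC.disk, Set.mem_setOf_eq, Prod.smul_mk, Prod.mk_add_mk, smul_eq_mul,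
    Prod.mk.injEq] at *
  obtain ⟨hx, hy⟩ := hpt
  obtain rfl : t = 1 - s := by linarith
  simp only [CC.pts, Set.mem_setOf_eq] at hp
  rw [← hx, ← hy] at hp
  have key : (a - c) ^ 2 + (b - d) ^ 2 ≤ 0 := by
    have h3 : s * (1 - s) > 0 := by nlinarith
    have h4 : s * (1 - s) * ((a - c) ^ 2 + (b - d) ^ 2) ≤ 0 := by
      nlinarith [mul_le_mul_of_nonneg_left h1 hs.le, mul_le_mul_of_nonneg_left h2 ht.le]
    nlinarith [sq_nonneg (a - c), sq_nonneg (b - d)]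
  have hac : a = c := by nlinarith [sq_nonneg (a - c), sq_nonneg (b - d)]
  have hbd : b = d := by nlinarith [sq_nonneg (a - c), sq_nonneg (b - d)]
  subst hac; subst hbd
  have hxa : a = x := by nlinarith
  have hyb : b = y := by nlinarith
  simp [hxa, hyb]

lemma CC.extreme_mem (C : CC) {S : Set (ℝ × ℝ)} (hS : S ⊆ C.disk) {p : ℝ × ℝ}
    (hp : p ∈ C.pts) (hpc : p ∈ convexHull ℝ S) : p ∈ S := by
  have h1 : convexHull ℝ S ⊆ C.disk := convexHull_min hS C.disk_convex
  exact extremePoints_convexHull_subset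
    (inter_extremePoints_subset_extremePoints_of_subset h1
      ⟨hpc, C.mem_extremePoints_disk hp⟩)

lemma CC.inter_finite {C D : CC} (h : ¬(D.u = C.u ∧ D.r = C.r)) :
    (C.pts ∩ D.pts).Finite := by
  by_cases hu : D.u = C.u
  · have hr : D.r ≠ C.r := fun hr => h ⟨hu, hr⟩
    apply Set.Finite.subset Set.finite_empty
    rintro ⟨x, y⟩ ⟨h1, h2⟩
    simp only [CC.pts, Set.mem_setOf_eq] at h1 h2
    rw [hu] at h2
    have hsq : D.r ^ 2 = C.r ^ 2 := by linarith
    exact hr (le_antisymm (by nlinarith [C.hr, D.hr]) (by nlinarith [C.hr, D.hr]))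
  · set x0 : ℝ := (C.r ^ 2 - D.r ^ 2 + D.u ^ 2 - C.u ^ 2) / (2 * (D.u - C.u)) with hx0
    set c : ℝ := C.r ^ 2 - (x0 - C.u) ^ 2 with hc
    apply Set.Finite.subset ((Set.finite_singleton ((x0, -Real.sqrt c) : ℝ × ℝ)).insert
      (x0, Real.sqrt c))
    rintro ⟨x, y⟩ ⟨h1, h2⟩
    simp only [CC.pts, Set.mem_setOf_eq] at h1 h2
    have hdu : D.u - C.u ≠ 0 := fun hh => hu (by linarith)
    have hx : x = x0 := by
      rw [hx0]; field_simp; nlinarith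
    subst hx
    have hyc : y ^ 2 = c := by rw [hc]; linarith
    have hcnn : 0 ≤ c := hyc ▸ sq_nonneg y
    have : y = Real.sqrt c ∨ y = -Real.sqrt c := by
      rcases le_or_gt 0 y with hy | hy
      · left; rw [← Real.sqrt_sq hy, hyc]
      · right
        have : -y = Real.sqrt c := by rw [← Real.sqrt_sq (by linarith : (0:ℝ) ≤ -y)]
                                      congr 1; nlinarith
        linarith
    rcases this with rfl | rfl
    · exact Set.mem_insert _ _
    · exact Set.mem_insert_of_mem _ rfl

lemma CC.pts_infinite {C : CC} (h : 0 < C.r) : C.pts.Infinite := by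
  have hIcc : (Set.Icc (C.u - C.r) (C.u + C.r)).Infinite :=
    Set.Icc_infinite (by linarith)
  have := hIcc.image (f := fun x => ((x, Real.sqrt (C.r ^ 2 - (x - C.u) ^ 2)) : ℝ × ℝ))
    (fun a _ b _ hab => by simpa using congrArg Prod.fst hab)
  apply this.mono
  rintro ⟨x, y⟩ ⟨a, ha, hab⟩
  obtain ⟨rfl, rfl⟩ : a = x ∧ Real.sqrt (C.r ^ 2 - (a - C.u) ^ 2) = y := by
    simpa [Prod.ext_iff] using hab
  have h1 : (a - C.u) ^ 2 ≤ C.r ^ 2 := by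
    rcases ha with ⟨ha1, ha2⟩; nlinarith
  simp only [CC.pts, Set.mem_setOf_eq]
  rw [Real.sq_sqrt (by linarith)]; ring

/-- Key geometric lemma. -/
lemma key_lemma (A : CC) (W : Set CC) (hWfin : W.Finite)
    (hW : ∀ D ∈ W, D.pts ⊆ convexHull ℝ A.pts)
    (hA : A.pts ⊆ convexHull ℝ (⋃ D ∈ W, CC.pts D)) :
    ∃ D ∈ W, D.u = A.u ∧ D.r = A.r := by
  by_contra hcon
  push_neg at hcon
  have hWd : (⋃ D ∈ W, CC.pts D) ⊆ A.disk := by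
    intro p hp
    obtain ⟨D, hD, hpD⟩ := Set.mem_iUnion₂.mp hp
    exact A.convexHull_pts ▸ hW D hD hpD
  have hcov : A.pts ⊆ ⋃ D ∈ W, CC.pts D := fun p hp =>
    A.extreme_mem hWd hp (hA hp)
  rcases eq_or_lt_of_le A.hr with h0 | h0
  · -- degenerate point circle
    have hpA : ((A.u, 0) : ℝ × ℝ) ∈ A.pts := by simp [CC.pts, ← h0]
    obtain ⟨D, hD, hpD⟩ := Set.mem_iUnion₂.mp (hcov hpA)
    have hDd : D.pts ⊆ A.disk := A.convexHull_pts ▸ hW D hD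
    have h1 := hDd (show ((D.u + D.r, 0) : ℝ × ℝ) ∈ D.pts by simp [CC.pts])
    have h2 := hDd (show ((D.u - D.r, 0) : ℝ × ℝ) ∈ D.pts by simp [CC.pts])
    simp only [CC.disk, Set.mem_setOf_eq, ← h0] at h1 h2
    have e1 : D.u + D.r = A.u := by nlinarith
    have e2 : D.u - D.r = A.u := by nlinarith
    exact hcon D hD (by linarith) (by linarith)
  · -- proper circle: finitely many intersection points can't cover it
    have : A.pts = ⋃ D ∈ W, (A.pts ∩ D.pts) := by
      apply Set.eq_of_subset_of_subset
      · intro p hp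
        obtain ⟨D, hD, hpD⟩ := Set.mem_iUnion₂.mp (hcov hp)
        exact Set.mem_iUnion₂.mpr ⟨D, hD, hp, hpD⟩
      · intro p hp
        obtain ⟨D, _, hpD, _⟩ := Set.mem_iUnion₂.mp hp
        exact hpD
    have hfin : (⋃ D ∈ W, (A.pts ∩ D.pts)).Finite :=
      hWfin.biUnion (fun D hD => CC.inter_finite
        (fun hh => hcon D hD hh.1 hh.2))
    exact CC.pts_infinite h0 (this ▸ hfin)

/- ### Closure operator algebra -/

lemma ch_subset (F X : Set CC) : ch F X ⊆ F := fun _ h => h.1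

lemma ch_mono (F : Set CC) {X Y : Set CC} (h : X ⊆ Y) : ch F X ⊆ ch F Y := by
  intro C hC
  refine ⟨hC.1, hC.2.trans (convexHull_mono ?_)⟩
  exact Set.biUnion_subset_biUnion_left h

lemma ch_extensive (F : Set CC) {X : Set CC} (h : X ⊆ F) : X ⊆ ch F X :=
  fun C hC => ⟨h hC, fun p hp => subset_convexHull ℝ _ (Set.mem_biUnion hC hp)⟩

lemma biUnion_ch_subset (F X : Set CC) :
    (⋃ D ∈ ch F X, CC.pts D) ⊆ convexHull ℝ (⋃ D ∈ X, CC.pts D) := by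
  intro p hp
  obtain ⟨D, hD, hpD⟩ := Set.mem_iUnion₂.mp hp
  exact hD.2 hpD

lemma ch_ch (F X : Set CC) : ch F (ch F X) = ch F X := by
  apply Set.eq_of_subset_of_subset
  · intro C hC
    refine ⟨hC.1, hC.2.trans ?_⟩
    exact convexHull_min (biUnion_ch_subset F X) (convex_convexHull ℝ _)
  · exact ch_extensive F (ch_subset F X)

lemma ch_union_ch (F : Set CC) {Y Z : Set CC} (hY : Y ⊆ F) (hZ : Z ⊆ F) :
    ch F (ch F Y ∪ ch F Z) = ch F (Y ∪ Z) := by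
  apply Set.eq_of_subset_of_subset
  · intro C hC
    refine ⟨hC.1, hC.2.trans ?_⟩
    apply convexHull_min _ (convex_convexHull ℝ _)
    intro p hp
    obtain ⟨D, hD, hpD⟩ := Set.mem_iUnion₂.mp hp
    rcases hD with hD | hD
    · exact convexHull_mono (Set.biUnion_subset_biUnion_left Set.subset_union_left)
        (hD.2 hpD)
    · exact convexHull_mono (Set.biUnion_subset_biUnion_left Set.subset_union_right)
        (hD.2 hpD)
  · exact ch_mono F (Set.union_subset_union (ch_extensive F hY) (ch_extensive F hZ))

lemma ch_empty (F : Set CC) : ch F ∅ = ∅ := by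
  ext C
  simp only [ch, Set.mem_setOf_eq, Set.mem_empty_iff_false, iff_false, not_and]
  intro _
  simp only [Set.mem_empty_iff_false, Set.iUnion_of_empty, Set.iUnion_empty,
    convexHull_empty]
  intro hsub
  obtain ⟨p, hp⟩ := C.pts_nonempty
  exact absurd (hsub hp) (Set.notMem_empty p)

lemma ch_singleton (F : Set CC) (A : CC) :
    ch F {A} = {C : CC | C ∈ F ∧ C.pts ⊆ convexHull ℝ A.pts} := by
  unfold ch
  rw [Set.biUnion_singleton]

/-- For a finite set `F` of collinear circles, the join-irreducible
elements of the lattice of closed sets of `(F, ch)` (the nonbottom closed sets `X`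
such that `X = Y ⊔ Z` for closed `Y, Z` forces `X = Y` or `X = Z`; the join of
closed sets being the closure of the union) are exactly the sets
`[A,A] = {C ∈ F : C ⊆ conv(A)}` for `A ∈ F`. -/
theorem stmt6 (F : Set CC) (hF : F.Finite) :
    {X : Set CC | X ⊆ F ∧ ch F X = X ∧ X ≠ ∅ ∧
      ∀ Y Z : Set CC, Y ⊆ F → ch F Y = Y → Z ⊆ F → ch F Z = Z →
        X = ch F (Y ∪ Z) → X = Y ∨ X = Z} =
    {S : Set CC | ∃ A ∈ F, S = {C : CC | C ∈ F ∧ C.pts ⊆ convexHull ℝ A.pts}} := by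
  ext X
  simp only [Set.mem_setOf_eq]
  constructor
  · rintro ⟨hXF, hXcl, hXne, hXirr⟩
    have hXfin : X.Finite := hF.subset hXF
    have main : ∀ T : Finset CC, (↑T : Set CC) ⊆ F → T.Nonempty → X = ch F ↑T →
        ∃ A ∈ (↑T : Set CC), X = ch F {A} := by
      intro T
      classical
      induction T using Finset.induction_on with
      | empty => intro _ hne _; exact absurd hne (by simp)
      | @insert a T' hnotmem ih =>
        intro hsub _ hXT
        have haF : a ∈ F := hsub (by simp)
        have hT'F : (↑T' : Set CC) ⊆ F := fun x hx => hsub (by simp [hx])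
        have hXT2 : X = ch F (ch F {a} ∪ ch F ↑T') := by
          rw [ch_union_ch F (Set.singleton_subset_iff.mpr haF) hT'F]
          rw [hXT, Finset.coe_insert, Set.insert_eq]
        rcases hXirr (ch F {a}) (ch F ↑T') (ch_subset F _) (ch_ch F _)
            (ch_subset F _) (ch_ch F _) hXT2 with h | h
        · exact ⟨a, by simp, h⟩
        · rcases T'.eq_empty_or_nonempty with rfl | hne'
          · rw [Finset.coe_empty, ch_empty] at h
            exact absurd h hXne
          · obtain ⟨A, hA, hXA⟩ := ih hT'F hne' h
            exact ⟨A, by simp at hA ⊢; exact Or.inr hA, hXA⟩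
    obtain ⟨A, hAX, hXA⟩ := main hXfin.toFinset
      (by rw [Set.Finite.coe_toFinset]; exact hXF)
      (by rw [← Finset.coe_nonempty, Set.Finite.coe_toFinset]
          exact Set.nonempty_iff_ne_empty.mpr hXne)
      (by rw [Set.Finite.coe_toFinset]; exact hXcl.symm)
    rw [Set.Finite.coe_toFinset] at hAX
    exact ⟨A, hXF hAX, by rw [hXA, ch_singleton]⟩
  · rintro ⟨A, hAF, rfl⟩
    rw [← ch_singleton]
    have hAmem : A ∈ ch F {A} := ch_extensive F (Set.singleton_subset_iff.mpr hAF) rfl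
    refine ⟨ch_subset F _, ch_ch F _, ?_, ?_⟩
    · exact Set.nonempty_iff_ne_empty.mp ⟨A, hAmem⟩
    · intro Y Z hYF hYcl hZF hZcl hEq
      have hYZF : Y ∪ Z ⊆ F := Set.union_subset hYF hZF
      have hYsub : Y ⊆ ch F {A} := by
        rw [hEq]; exact (Set.subset_union_left).trans (ch_extensive F hYZF)
      have hZsub : Z ⊆ ch F {A} := by
        rw [hEq]; exact (Set.subset_union_right).trans (ch_extensive F hYZF)
      have hAin : A ∈ ch F (Y ∪ Z) := hEq ▸ hAmem
      have hW : ∀ D ∈ Y ∪ Z, D.pts ⊆ convexHull ℝ A.pts := by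
        intro D hD
        rcases hD with hD | hD
        · exact ((ch_singleton F A ▸ hYsub hD) : _ ∧ _).2
        · exact ((ch_singleton F A ▸ hZsub hD) : _ ∧ _).2
      obtain ⟨D, hD, hu, hr⟩ := key_lemma A (Y ∪ Z) (hF.subset hYZF) hW hAin.2
      have hpts : A.pts = D.pts := by unfold CC.pts; rw [hu, hr]
      rcases hD with hD | hD
      · left
        have hAY : A ∈ Y := by
          rw [← hYcl]
          exact ⟨hAF, fun p hp => subset_convexHull ℝ _
            (Set.mem_biUnion hD (hpts ▸ hp))⟩
        apply Set.eq_of_subset_of_subset _ hYsub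
        calc ch F {A} ⊆ ch F Y := ch_mono F (Set.singleton_subset_iff.mpr hAY)
          _ = Y := hYcl
      · right
        have hAZ : A ∈ Z := by
          rw [← hZcl]
          exact ⟨hAF, fun p hp => subset_convexHull ℝ _
            (Set.mem_biUnion hD (hpts ▸ hp))⟩
        apply Set.eq_of_subset_of_subset _ hZsub
        calc ch F {A} ⊆ ch F Z := ch_mono F (Set.singleton_subset_iff.mpr hAZ)
          _ = Z := hZcl
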